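/- For any probability measure Π on [0,1] with voting curve V_n(Π) = ∫ P_n(q) dΠ(q) and signed voting signature ω_Π defined as the pushforward of (2q−1)·Π under q ↦ q(1−q), one has V_0(Π) = (1 + ω_Π([0,1/4]))/2 and V_{n+1}(Π) − V_n(Π) = C(2n+1, n+1) · ∫_{[0,1/4]} r^{n+1} dω_Π(r) for all n ≥ 0. -/

import Mathlib

open MeasureTheory

/-- Odd-budget majority accuracy: `P n q = ℙ(Bin(2n+1,q) ≥ n+1)`. -/
noncomputable def majP (n : ℕ) (q : ℝ) : ℝ :=
  ∑ j ∈ Finset.Icc (n+1) (2*n+1), ((2*n+1).choose j : ℝ) * q^j * (1-q)^(2*n+1-j)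

/-- Population voting curve. -/
noncomputable def voteV (μ : Measure ℝ) (n : ℕ) : ℝ := ∫ q, majP n q ∂μ

lemma aux_fin (μ : Measure ℝ) [IsFiniteMeasure μ] (g : ℝ → ℝ) (hg : ∀ q ∈ Set.Icc (0:ℝ) 1, g q ≤ 1) :
    IsFiniteMeasure ((μ.restrict (Set.Icc 0 1)).withDensity (fun q => ENNReal.ofReal (g q))) := by
  apply isFiniteMeasure_withDensity
  have h : ∫⁻ q, ENNReal.ofReal (g q) ∂(μ.restrict (Set.Icc 0 1)) ≤ ∫⁻ _, 1 ∂(μ.restrict (Set.Icc 0 1)) := by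
    refine setLIntegral_mono' measurableSet_Icc fun q hq => ?_
    simpa using ENNReal.ofReal_le_one.2 (hg q hq)
  refine ne_of_lt (lt_of_le_of_lt h ?_)
  simp [lintegral_one]

/-- Signed voting signature as a signed measure on ℝ (carried on [0,1/4]). -/
noncomputable def signature (μ : Measure ℝ) [IsFiniteMeasure μ] : SignedMeasure ℝ :=
  letI h1 := aux_fin μ (fun q => 2*q-1) (by intro q hq; simp only [Set.mem_Icc] at hq; linarith [hq.2])
  letI h2 := aux_fin μ (fun q => 1-2*q) (by intro q hq; simp only [Set.mem_Icc] at hq; linarith [hq.1])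
  (((μ.restrict (Set.Icc 0 1)).withDensity (fun q => ENNReal.ofReal (2*q-1))).map
      (fun q => q*(1-q))).toSignedMeasure
  - (((μ.restrict (Set.Icc 0 1)).withDensity (fun q => ENNReal.ofReal (1-2*q))).map
      (fun q => q*(1-q))).toSignedMeasure

/-- Integral of a real function against a signed measure, via the Jordan decomposition. -/
noncomputable def sInt {α : Type*} [MeasurableSpace α] (s : SignedMeasure α) (f : α → ℝ) : ℝ :=
  (∫ a, f a ∂s.toJordanDecomposition.posPart) - ∫ a, f a ∂s.toJordanDecomposition.negPart

/-- Limiting majority accuracy. -/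
noncomputable def voteVinf (μ : Measure ℝ) : ℝ :=
  (μ (Set.Ioc (1/2 : ℝ) 1)).toReal + (1/2) * (μ {(1/2 : ℝ)}).toReal

/-- Total-variation norm of the signed voting signature. -/
noncomputable def sigTV (μ : Measure ℝ) [IsFiniteMeasure μ] : ℝ :=
  ((signature μ).totalVariation Set.univ).toReal

/- ===== auxiliary lemmas ===== -/

lemma icc_bot (a b : ℕ) (h : a ≤ b) : Finset.Icc a b = insert a (Finset.Icc (a+1) b) := by
  ext x; simp only [Finset.mem_Icc, Finset.mem_insert]; omega

lemma icc_top (a b : ℕ) (h : a ≤ b+1) : Finset.Icc a (b+1) = insert (b+1) (Finset.Icc a b) := by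
  ext x; simp only [Finset.mem_Icc, Finset.mem_insert]; omega

lemma choose3 (n k : ℕ) : (2*n+3).choose (k+2)
    = (2*n+1).choose k + 2*((2*n+1).choose (k+1)) + (2*n+1).choose (k+2) := by
  have h1 : (2*n+3).choose (k+2) = (2*n+2).choose (k+1) + (2*n+2).choose (k+2) :=
    Nat.choose_succ_succ _ _
  have h2 : (2*n+2).choose (k+1) = (2*n+1).choose k + (2*n+1).choose (k+1) :=
    Nat.choose_succ_succ _ _
  have h3 : (2*n+2).choose (k+2) = (2*n+1).choose (k+1) + (2*n+1).choose (k+2) :=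
    Nat.choose_succ_succ _ _
  omega

lemma majP_key (n : ℕ) (q : ℝ) :
    majP (n+1) q - majP n q =
      ((2*n+1).choose (n+1) : ℝ) * (2*q-1) * (q*(1-q))^(n+1) := by
  set p := 1 - q with hp
  set S := majP n q with hS
  have hmain : majP (n+1) q =
      q^2 * (((2*n+1).choose n : ℝ) * q^n * p^(n+1) + S)
      + 2*q*p * S
      + p^2 * (S - ((2*n+1).choose (n+1) : ℝ) * q^(n+1) * p^n) := by
    have e1 : majP (n+1) q
        = ∑ k ∈ Finset.Icc n (2*n+1), ((2*n+3).choose (k+2) : ℝ) * q^(k+2) * p^(2*n+1-k) := by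
      rw [majP]
      have hmap : Finset.Icc (n+1+1) (2*(n+1)+1) = (Finset.Icc n (2*n+1)).map (addRightEmbedding 2) := by
        rw [Finset.map_add_right_Icc]; congr 1
      rw [hmap, Finset.sum_map]
      refine Finset.sum_congr rfl fun k hk => ?_
      simp only [Finset.mem_Icc] at hk
      have h2 : 2*(n+1)+1 - (k+2) = 2*n+1-k := by omega
      have h3 : (2*(n+1)+1).choose (k+2) = (2*n+3).choose (k+2) := by congr 1
      simp only [addRightEmbedding_apply, h2, h3, hp]
    have e2 : majP (n+1) q
        = (∑ k ∈ Finset.Icc n (2*n+1), ((2*n+1).choose k : ℝ) * q^(k+2) * p^(2*n+1-k))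
        + 2 * (∑ k ∈ Finset.Icc n (2*n+1), ((2*n+1).choose (k+1) : ℝ) * q^(k+2) * p^(2*n+1-k))
        + (∑ k ∈ Finset.Icc n (2*n+1), ((2*n+1).choose (k+2) : ℝ) * q^(k+2) * p^(2*n+1-k)) := by
      rw [e1, Finset.mul_sum, ← Finset.sum_add_distrib, ← Finset.sum_add_distrib]
      refine Finset.sum_congr rfl fun k _ => ?_
      rw [choose3]; push_cast; ring
    have s1 : (∑ k ∈ Finset.Icc n (2*n+1), ((2*n+1).choose k : ℝ) * q^(k+2) * p^(2*n+1-k))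
        = q^2 * (((2*n+1).choose n : ℝ) * q^n * p^(n+1) + S) := by
      rw [icc_bot n (2*n+1) (by omega), Finset.sum_insert (by simp), hS, majP]
      simp only [← hp]
      rw [show 2*n+1-n = n+1 by omega, mul_add]
      congr 1
      · ring
      · rw [Finset.mul_sum]
        refine Finset.sum_congr rfl fun k hk => ?_
        ring
    have s2 : (∑ k ∈ Finset.Icc n (2*n+1), ((2*n+1).choose (k+1) : ℝ) * q^(k+2) * p^(2*n+1-k))
        = q * p * S := by
      have hmap : Finset.Icc (n+1) (2*n+2) = (Finset.Icc n (2*n+1)).map (addRightEmbedding 1) := by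
        rw [Finset.map_add_right_Icc]
      have e : (∑ k ∈ Finset.Icc n (2*n+1), ((2*n+1).choose (k+1) : ℝ) * q^(k+2) * p^(2*n+1-k))
          = ∑ j ∈ Finset.Icc (n+1) (2*n+2), ((2*n+1).choose j : ℝ) * q^(j+1) * p^(2*n+2-j) := by
        rw [hmap, Finset.sum_map]
        refine Finset.sum_congr rfl fun k hk => ?_
        simp only [Finset.mem_Icc] at hk
        have h2 : 2*n+2-(k+1) = 2*n+1-k := by omega
        simp only [addRightEmbedding_apply, h2]
      rw [e, show 2*n+2 = (2*n+1)+1 by ring, icc_top _ _ (by omega),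
        Finset.sum_insert (by simp)]
      have hz : ((2*n+1).choose (2*n+1+1) : ℝ) = 0 := by
        norm_cast; exact Nat.choose_eq_zero_of_lt (by omega)
      rw [hz, hS, majP]
      simp only [← hp, zero_mul, zero_add]
      rw [Finset.mul_sum]
      refine Finset.sum_congr rfl fun k hk => ?_
      simp only [Finset.mem_Icc] at hk
      rw [show 2*n+1+1-k = (2*n+1-k)+1 by omega]
      ring
    have s3 : (∑ k ∈ Finset.Icc n (2*n+1), ((2*n+1).choose (k+2) : ℝ) * q^(k+2) * p^(2*n+1-k))
        = p^2 * (S - ((2*n+1).choose (n+1) : ℝ) * q^(n+1) * p^n) := by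
      have hmap : Finset.Icc (n+2) (2*n+3) = (Finset.Icc n (2*n+1)).map (addRightEmbedding 2) := by
        rw [Finset.map_add_right_Icc]
      have e : (∑ k ∈ Finset.Icc n (2*n+1), ((2*n+1).choose (k+2) : ℝ) * q^(k+2) * p^(2*n+1-k))
          = ∑ j ∈ Finset.Icc (n+2) (2*n+3), ((2*n+1).choose j : ℝ) * q^j * p^(2*n+3-j) := by
        rw [hmap, Finset.sum_map]
        refine Finset.sum_congr rfl fun k hk => ?_
        simp only [Finset.mem_Icc] at hk
        have h2 : 2*n+3-(k+2) = 2*n+1-k := by omega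
        simp only [addRightEmbedding_apply, h2]
      have hsplit : S = ((2*n+1).choose (n+1) : ℝ) * q^(n+1) * p^n
          + ∑ j ∈ Finset.Icc (n+2) (2*n+1), ((2*n+1).choose j : ℝ) * q^j * p^(2*n+1-j) := by
        rw [hS, majP, icc_bot (n+1) (2*n+1) (by omega), Finset.sum_insert (by simp)]
        simp only [← hp]
        rw [show 2*n+1-(n+1) = n by omega]
      have e3 : (∑ j ∈ Finset.Icc (n+2) (2*n+3), ((2*n+1).choose j : ℝ) * q^j * p^(2*n+3-j))
          = ∑ j ∈ Finset.Icc (n+2) (2*n+1), ((2*n+1).choose j : ℝ) * q^j * p^(2*n+3-j) := by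
        rw [show 2*n+3 = (2*n+2)+1 by ring, icc_top _ _ (by omega),
          Finset.sum_insert (by simp), show 2*n+2 = (2*n+1)+1 by ring,
          icc_top _ _ (by omega), Finset.sum_insert (by simp)]
        have hz1 : ((2*n+1).choose (2*n+1+1+1) : ℝ) = 0 := by
          norm_cast; exact Nat.choose_eq_zero_of_lt (by omega)
        have hz2 : ((2*n+1).choose (2*n+1+1) : ℝ) = 0 := by
          norm_cast; exact Nat.choose_eq_zero_of_lt (by omega)
        rw [hz1, hz2]; ring
      have e4 : (∑ j ∈ Finset.Icc (n+2) (2*n+1), ((2*n+1).choose j : ℝ) * q^j * p^(2*n+3-j))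
          = ∑ j ∈ Finset.Icc (n+2) (2*n+1), p^2 * (((2*n+1).choose j : ℝ) * q^j * p^(2*n+1-j)) := by
        refine Finset.sum_congr rfl fun j hj => ?_
        simp only [Finset.mem_Icc] at hj
        rw [show 2*n+3-j = (2*n+1-j)+2 by omega]
        ring
      rw [e, e3, e4, ← Finset.mul_sum, hsplit]
      ring
    rw [e2, s1, s2, s3]; ring
  have hcs : ((2*n+1).choose n : ℝ) = ((2*n+1).choose (n+1) : ℝ) := by
    norm_cast
    rw [← Nat.choose_symm (show n+1 ≤ 2*n+1 by omega), show 2*n+1-(n+1) = n by omega]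
  rw [hmain, hcs, mul_pow, hp]
  ring

lemma majP_zero' (q : ℝ) : majP 0 q = q := by
  norm_num [majP]

lemma majP_cont (n : ℕ) : Continuous (majP n) := by
  unfold majP
  exact continuous_finset_sum _ fun j _ => by fun_prop

lemma majP_bound (n : ℕ) (q : ℝ) (hq : q ∈ Set.Icc (0:ℝ) 1) :
    |majP n q| ≤ ∑ j ∈ Finset.Icc (n+1) (2*n+1), ((2*n+1).choose j : ℝ) := by
  simp only [Set.mem_Icc] at hq
  rw [majP]
  refine (Finset.abs_sum_le_sum_abs _ _).trans (Finset.sum_le_sum fun j _ => ?_)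
  rw [abs_mul, abs_mul, abs_pow, abs_pow, abs_of_nonneg (by positivity : (0:ℝ) ≤ ((2*n+1).choose j : ℝ))]
  have h1 : |q| ≤ 1 := abs_le.2 ⟨by linarith [hq.1], hq.2⟩
  have h2 : |1-q| ≤ 1 := abs_le.2 ⟨by linarith [hq.2], by linarith [hq.1]⟩
  calc ((2*n+1).choose j : ℝ) * |q|^j * |1-q|^(2*n+1-j)
      ≤ ((2*n+1).choose j : ℝ) * 1 * 1 := by
        apply mul_le_mul (mul_le_mul le_rfl (pow_le_one₀ (abs_nonneg _) h1) (by positivity) (by positivity))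
          (pow_le_one₀ (abs_nonneg _) h2) (by positivity) (by positivity)
    _ = ((2*n+1).choose j : ℝ) := by ring

lemma int_of_bound {μ : Measure ℝ} [IsFiniteMeasure μ] {f : ℝ → ℝ} (C : ℝ)
    (hf : AEStronglyMeasurable f μ) (h : ∀ᵐ q ∂μ, |f q| ≤ C) : Integrable f μ :=
  Integrable.mono' (integrable_const C) hf (h.mono fun q hq => by rwa [Real.norm_eq_abs])

lemma le_of_add_eq_add {α : Type*} [MeasurableSpace α] {p n v w : Measure α}
    (hsing : p ⟂ₘ n) (h : p + w = n + v) : p ≤ v := by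
  obtain ⟨u, hum, hpu, hnu⟩ := hsing
  refine Measure.le_iff.2 fun A hA => ?_
  have h1 : p A = p (A \ u) := (measure_diff_null hpu).symm
  have h2 : n (A \ u) = 0 := measure_mono_null (fun x hx => hx.2) hnu
  have h3 := congrArg (fun m : Measure α => m (A \ u)) h
  simp only [Measure.add_apply] at h3
  rw [h2, zero_add] at h3
  calc p A = p (A \ u) := h1
    _ ≤ p (A \ u) + w (A \ u) := le_self_add
    _ = v (A \ u) := h3
    _ ≤ v A := measure_mono Set.diff_subset

lemma max_sub_max (a t : ℝ) : max a 0 * t - max (-a) 0 * t = a * t := by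
  rcases le_total a 0 with h|h
  · rw [max_eq_right h, max_eq_left (by linarith)]; ring
  · rw [max_eq_left h, max_eq_right (by linarith)]; ring

/-- The odd-budget curve starts at `V₀ = (1+ω([0,1/4]))/2` and its increments are
signed Hausdorff moments of the signed voting signature. -/
theorem stmt3 (μ : Measure ℝ) [IsProbabilityMeasure μ] (hμ : μ (Set.Icc (0:ℝ) 1)ᶜ = 0) :
    voteV μ 0 = (1 + signature μ (Set.Icc (0:ℝ) (1/4))) / 2 ∧
    ∀ n : ℕ, voteV μ (n+1) - voteV μ n =
      ((2*n+1).choose (n+1) : ℝ) * sInt (signature μ) (fun r => r^(n+1)) := by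
  have hg : Measurable (fun q : ℝ => q*(1-q)) := by fun_prop
  have hmc1 : Measurable (fun q : ℝ => 2*q-1) := by fun_prop
  have hmc2 : Measurable (fun q : ℝ => 1-2*q) := by fun_prop
  have hae : ∀ᵐ q ∂μ, q ∈ Set.Icc (0:ℝ) 1 := by
    rw [MeasureTheory.ae_iff]; exact hμ
  have hρ : μ.restrict (Set.Icc (0:ℝ) 1) = μ := Measure.restrict_eq_self_of_ae_mem hae
  haveI hfin1 : IsFiniteMeasure ((μ.restrict (Set.Icc (0:ℝ) 1)).withDensity (fun q => ENNReal.ofReal (2*q-1))) :=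
    aux_fin μ _ (fun q hq => by simp only [Set.mem_Icc] at hq; linarith [hq.2])
  haveI hfin2 : IsFiniteMeasure ((μ.restrict (Set.Icc (0:ℝ) 1)).withDensity (fun q => ENNReal.ofReal (1-2*q))) :=
    aux_fin μ _ (fun q hq => by simp only [Set.mem_Icc] at hq; linarith [hq.1])
  haveI hfm1 : IsFiniteMeasure (((μ.restrict (Set.Icc (0:ℝ) 1)).withDensity (fun q => ENNReal.ofReal (2*q-1))).map (fun q => q*(1-q))) :=
    Measure.isFiniteMeasure_map _ _
  haveI hfm2 : IsFiniteMeasure (((μ.restrict (Set.Icc (0:ℝ) 1)).withDensity (fun q => ENNReal.ofReal (1-2*q))).map (fun q => q*(1-q))) :=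
    Measure.isFiniteMeasure_map _ _
  have hsig : signature μ =
      (((μ.restrict (Set.Icc (0:ℝ) 1)).withDensity (fun q => ENNReal.ofReal (2*q-1))).map (fun q => q*(1-q))).toSignedMeasure
      - (((μ.restrict (Set.Icc (0:ℝ) 1)).withDensity (fun q => ENNReal.ofReal (1-2*q))).map (fun q => q*(1-q))).toSignedMeasure := rfl
  have hmem : ∀ q ∈ Set.Icc (0:ℝ) 1, q*(1-q) ∈ Set.Icc (0:ℝ) (1/4) := by
    intro q hq; simp only [Set.mem_Icc] at hq ⊢
    constructor
    · nlinarith [hq.1, hq.2]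
    · nlinarith [sq_nonneg (q - 1/2)]
  -- ρ gives no mass outside the preimage of [0,1/4]
  have hρnull : μ.restrict (Set.Icc (0:ℝ) 1) (((fun q : ℝ => q*(1-q)) ⁻¹' (Set.Icc (0:ℝ) (1/4)))ᶜ) = 0 := by
    rw [Measure.restrict_apply' measurableSet_Icc]
    convert measure_empty (μ := μ)
    ext q
    simp only [Set.mem_inter_iff, Set.mem_compl_iff, Set.mem_preimage, Set.mem_empty_iff_false,
      iff_false, not_and]
    intro h1 h2
    exact h1 (hmem q h2)
  have hnull : ∀ (d : ℝ → ENNReal),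
      (((μ.restrict (Set.Icc (0:ℝ) 1)).withDensity d).map (fun q => q*(1-q))) ((Set.Icc (0:ℝ) (1/4))ᶜ) = 0 := by
    intro d
    rw [Measure.map_apply hg measurableSet_Icc.compl]
    exact (withDensity_absolutelyContinuous _ d) hρnull
  have hval : ∀ (c : ℝ → ℝ), Measurable c → (∀ q ∈ Set.Icc (0:ℝ) 1, |c q| ≤ 1) →
      ((((μ.restrict (Set.Icc (0:ℝ) 1)).withDensity (fun q => ENNReal.ofReal (c q))).map (fun q => q*(1-q)))
        (Set.Icc (0:ℝ) (1/4))).toReal = ∫ q, max (c q) 0 ∂(μ.restrict (Set.Icc (0:ℝ) 1)) := by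
    intro c hc hb
    have e1 : (((μ.restrict (Set.Icc (0:ℝ) 1)).withDensity (fun q => ENNReal.ofReal (c q))).map (fun q => q*(1-q)))
        (Set.Icc (0:ℝ) (1/4)) = ∫⁻ q, ENNReal.ofReal (c q) ∂(μ.restrict (Set.Icc (0:ℝ) 1)) := by
      have := measure_add_measure_compl
        (μ := (((μ.restrict (Set.Icc (0:ℝ) 1)).withDensity (fun q => ENNReal.ofReal (c q))).map (fun q => q*(1-q))))
        (measurableSet_Icc (a := (0:ℝ)) (b := 1/4))
      rw [hnull _, add_zero] at this
      rw [this, Measure.map_apply hg MeasurableSet.univ, Set.preimage_univ,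
        withDensity_apply _ MeasurableSet.univ, setLIntegral_univ]
    have h1 : ∀ q, ENNReal.ofReal (c q) = ENNReal.ofReal (max (c q) 0) := by
      intro q; rcases le_total (c q) 0 with h|h
      · rw [max_eq_right h, ENNReal.ofReal_eq_zero.2 h, ENNReal.ofReal_zero]
      · rw [max_eq_left h]
    have hint : Integrable (fun q => max (c q) 0) (μ.restrict (Set.Icc (0:ℝ) 1)) := by
      refine int_of_bound 1 ((hc.max measurable_const).aestronglyMeasurable) ?_
      refine (ae_restrict_mem measurableSet_Icc).mono fun q hq => ?_
      rw [abs_of_nonneg (le_max_right _ _)]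
      exact max_le (le_trans (le_abs_self _) (hb q hq)) zero_le_one
    rw [e1]
    simp only [h1]
    rw [← ofReal_integral_eq_lintegral_ofReal hint
        (Filter.Eventually.of_forall fun q => le_max_right _ _)]
    exact ENNReal.toReal_ofReal (integral_nonneg fun q => le_max_right _ _)
  -- integrability of plain functions against μ
  have hq_int : Integrable (fun q : ℝ => q) μ :=
    int_of_bound 1 measurable_id.aestronglyMeasurable
      (hae.mono fun q hq => by
        simp only [Set.mem_Icc] at hq; exact abs_le.2 ⟨by linarith [hq.1], hq.2⟩)
  have hsig_apply : signature μ (Set.Icc (0:ℝ) (1/4)) = 2 * (∫ q, q ∂μ) - 1 := by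
    rw [hsig, Measure.toSignedMeasure_sub_apply measurableSet_Icc, measureReal_def, measureReal_def,
      hval _ (by fun_prop) (fun q hq => by simp only [Set.mem_Icc] at hq; rw [abs_le]; constructor <;> linarith [hq.1, hq.2]),
      hval _ (by fun_prop) (fun q hq => by simp only [Set.mem_Icc] at hq; rw [abs_le]; constructor <;> linarith [hq.1, hq.2])]
    have hi1 : Integrable (fun q : ℝ => max (2*q-1) 0) (μ.restrict (Set.Icc (0:ℝ) 1)) := by
      rw [hρ]
      refine int_of_bound 1 ((hmc1.max measurable_const).aestronglyMeasurable) (hae.mono fun q hq => ?_)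
      simp only [Set.mem_Icc] at hq
      rw [abs_of_nonneg (le_max_right _ _)]
      exact max_le (by linarith [hq.2]) zero_le_one
    have hi2 : Integrable (fun q : ℝ => max (1-2*q) 0) (μ.restrict (Set.Icc (0:ℝ) 1)) := by
      rw [hρ]
      refine int_of_bound 1 ((hmc2.max measurable_const).aestronglyMeasurable) (hae.mono fun q hq => ?_)
      simp only [Set.mem_Icc] at hq
      rw [abs_of_nonneg (le_max_right _ _)]
      exact max_le (by linarith [hq.1]) zero_le_one
    rw [← integral_sub hi1 hi2, hρ]
    have : ∀ q : ℝ, max (2*q-1) 0 - max (1-2*q) 0 = 2*q-1 := by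
      intro q
      have := max_sub_max (2*q-1) 1
      rw [show -(2*q-1) = 1-2*q by ring] at this
      simpa using this
    simp only [this]
    rw [integral_sub (hq_int.const_mul 2) (integrable_const 1), integral_const]
    have h2q : ∫ q, 2*q ∂μ = 2 * ∫ q, q ∂μ := by
      simpa using integral_smul (2:ℝ) (fun q : ℝ => q) (μ := μ)
    rw [h2q]
    simp
  constructor
  · have h0 : voteV μ 0 = ∫ q, q ∂μ := by
      unfold voteV; congr 1; funext q; exact majP_zero' q
    rw [h0, hsig_apply]; ring
  · intro n
    -- part 2
    have hfcont : Continuous (fun r : ℝ => r^(n+1)) := continuous_pow (n+1)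
    have hCmaj : ∀ k, Integrable (majP k) μ := by
      intro k
      refine int_of_bound (∑ j ∈ Finset.Icc (k+1) (2*k+1), ((2*k+1).choose j : ℝ))
        (majP_cont k).aestronglyMeasurable (hae.mono fun q hq => majP_bound k q hq)
    have hφint : Integrable (fun q : ℝ => (2*q-1) * (q*(1-q))^(n+1)) μ := by
      refine int_of_bound 1 ((hmc1.mul (hg.pow_const _)).aestronglyMeasurable) (hae.mono fun q hq => ?_)
      simp only [Set.mem_Icc] at hq
      rw [abs_mul, abs_pow]
      have h1 : |2*q-1| ≤ 1 := abs_le.2 ⟨by linarith [hq.1], by linarith [hq.2]⟩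
      have h2 : |q*(1-q)| ≤ 1 := by
        have := hmem q (by simp only [Set.mem_Icc]; exact hq)
        simp only [Set.mem_Icc] at this
        exact abs_le.2 ⟨by linarith [this.1], by linarith [this.2]⟩
      calc |2*q-1| * |q*(1-q)|^(n+1) ≤ 1 * 1 :=
            mul_le_mul h1 (pow_le_one₀ (abs_nonneg _) h2) (by positivity) zero_le_one
        _ = 1 := by ring
    -- LHS
    have hLHS : voteV μ (n+1) - voteV μ n =
        ((2*n+1).choose (n+1) : ℝ) * ∫ q, (2*q-1) * (q*(1-q))^(n+1) ∂μ := by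
      unfold voteV
      rw [← integral_sub (hCmaj (n+1)) (hCmaj n)]
      have hc : ∫ q, ((2*n+1).choose (n+1) : ℝ) * ((2*q-1) * (q*(1-q))^(n+1)) ∂μ
          = ((2*n+1).choose (n+1) : ℝ) * ∫ q, (2*q-1) * (q*(1-q))^(n+1) ∂μ := by
        simpa using integral_smul (((2*n+1).choose (n+1) : ℝ)) (fun q : ℝ => (2*q-1) * (q*(1-q))^(n+1)) (μ := μ)
      rw [← hc]
      congr 1; funext q
      rw [majP_key]; ring
    -- RHS: Jordan decomposition bookkeeping
    have hJ : (signature μ).toJordanDecomposition.posPart.toSignedMeasure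
        - (signature μ).toJordanDecomposition.negPart.toSignedMeasure
        = Measure.toSignedMeasure (((μ.restrict (Set.Icc (0:ℝ) 1)).withDensity (fun q => ENNReal.ofReal (2*q-1))).map (fun q => q*(1-q)))
        - Measure.toSignedMeasure (((μ.restrict (Set.Icc (0:ℝ) 1)).withDensity (fun q => ENNReal.ofReal (1-2*q))).map (fun q => q*(1-q))) := by
      rw [← hsig]
      exact (signature μ).toSignedMeasure_toJordanDecomposition
    have hmeq : (signature μ).toJordanDecomposition.posPart
          + (((μ.restrict (Set.Icc (0:ℝ) 1)).withDensity (fun q => ENNReal.ofReal (1-2*q))).map (fun q => q*(1-q)))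
        = (signature μ).toJordanDecomposition.negPart
          + (((μ.restrict (Set.Icc (0:ℝ) 1)).withDensity (fun q => ENNReal.ofReal (2*q-1))).map (fun q => q*(1-q))) := by
      ext A hA
      have h0 := congrArg (fun s : SignedMeasure ℝ => s A) hJ
      simp only [Measure.toSignedMeasure_sub_apply hA, measureReal_def] at h0
      simp only [Measure.add_apply]
      refine (ENNReal.toReal_eq_toReal_iff'
        (ENNReal.add_ne_top.2 ⟨measure_ne_top _ _, measure_ne_top _ _⟩)
        (ENNReal.add_ne_top.2 ⟨measure_ne_top _ _, measure_ne_top _ _⟩)).1 ?_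
      rw [ENNReal.toReal_add (measure_ne_top _ _) (measure_ne_top _ _),
        ENNReal.toReal_add (measure_ne_top _ _) (measure_ne_top _ _)]
      linarith
    have hple : (signature μ).toJordanDecomposition.posPart
        ≤ (((μ.restrict (Set.Icc (0:ℝ) 1)).withDensity (fun q => ENNReal.ofReal (2*q-1))).map (fun q => q*(1-q))) :=
      le_of_add_eq_add (signature μ).toJordanDecomposition.mutuallySingular hmeq
    have hnle : (signature μ).toJordanDecomposition.negPart
        ≤ (((μ.restrict (Set.Icc (0:ℝ) 1)).withDensity (fun q => ENNReal.ofReal (1-2*q))).map (fun q => q*(1-q))) :=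
      le_of_add_eq_add (signature μ).toJordanDecomposition.mutuallySingular.symm hmeq.symm
    -- integrability of r^(n+1) against all four measures
    have hfint : ∀ (κ : Measure ℝ) [IsFiniteMeasure κ], κ ((Set.Icc (0:ℝ) (1/4))ᶜ) = 0 →
        Integrable (fun r : ℝ => r^(n+1)) κ := by
      intro κ _ hκ
      refine int_of_bound 1 hfcont.aestronglyMeasurable ?_
      have haeκ : ∀ᵐ r ∂κ, r ∈ Set.Icc (0:ℝ) (1/4) := by
        rw [MeasureTheory.ae_iff]; exact hκ
      refine haeκ.mono fun r hr => ?_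
      simp only [Set.mem_Icc] at hr
      rw [abs_pow]
      exact pow_le_one₀ (abs_nonneg _) (abs_le.2 ⟨by linarith [hr.1], by linarith [hr.2]⟩)
    have hi1 := hfint _ (hnull (fun q => ENNReal.ofReal (2*q-1)))
    have hi2 := hfint _ (hnull (fun q => ENNReal.ofReal (1-2*q)))
    have hipos : Integrable (fun r : ℝ => r^(n+1)) (signature μ).toJordanDecomposition.posPart := by
      refine hfint _ (le_antisymm ?_ zero_le)
      refine le_trans (Measure.le_iff.1 hple _ measurableSet_Icc.compl) ?_
      rw [hnull]
    have hineg : Integrable (fun r : ℝ => r^(n+1)) (signature μ).toJordanDecomposition.negPart := by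
      refine hfint _ (le_antisymm ?_ zero_le)
      refine le_trans (Measure.le_iff.1 hnle _ measurableSet_Icc.compl) ?_
      rw [hnull]
    have hsum : (∫ r, r^(n+1) ∂(signature μ).toJordanDecomposition.posPart)
          + ∫ r, r^(n+1) ∂(((μ.restrict (Set.Icc (0:ℝ) 1)).withDensity (fun q => ENNReal.ofReal (1-2*q))).map (fun q => q*(1-q)))
        = (∫ r, r^(n+1) ∂(signature μ).toJordanDecomposition.negPart)
          + ∫ r, r^(n+1) ∂(((μ.restrict (Set.Icc (0:ℝ) 1)).withDensity (fun q => ENNReal.ofReal (2*q-1))).map (fun q => q*(1-q))) := by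
      rw [← integral_add_measure hipos hi2, ← integral_add_measure hineg hi1, hmeq]
    -- transfer map/withDensity integrals back to μ
    have hmapint : ∀ (c : ℝ → ℝ), Measurable c →
        (∫ r, r^(n+1) ∂(((μ.restrict (Set.Icc (0:ℝ) 1)).withDensity (fun q => ENNReal.ofReal (c q))).map (fun q => q*(1-q))))
          = ∫ q, max (c q) 0 * (q*(1-q))^(n+1) ∂(μ.restrict (Set.Icc (0:ℝ) 1)) := by
      intro c hc
      rw [integral_map hg.aemeasurable hfcont.aestronglyMeasurable]
      have hcoe : (fun q => ENNReal.ofReal (c q)) = (fun q => (((c q).toNNReal) : ENNReal)) := rfl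
      rw [hcoe, integral_withDensity_eq_integral_smul hc.real_toNNReal]
      refine integral_congr_ae (Filter.Eventually.of_forall fun q => ?_)
      simp [NNReal.smul_def, Real.coe_toNNReal']
    have hRHS : sInt (signature μ) (fun r => r^(n+1)) = ∫ q, (2*q-1) * (q*(1-q))^(n+1) ∂μ := by
      have hd : sInt (signature μ) (fun r => r^(n+1))
          = (∫ r, r^(n+1) ∂(((μ.restrict (Set.Icc (0:ℝ) 1)).withDensity (fun q => ENNReal.ofReal (2*q-1))).map (fun q => q*(1-q))))
          - ∫ r, r^(n+1) ∂(((μ.restrict (Set.Icc (0:ℝ) 1)).withDensity (fun q => ENNReal.ofReal (1-2*q))).map (fun q => q*(1-q))) := by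
        unfold sInt
        linarith [hsum]
      rw [hd, hmapint _ (by fun_prop), hmapint _ (by fun_prop)]
      have hb1 : Integrable (fun q : ℝ => max (2*q-1) 0 * (q*(1-q))^(n+1)) (μ.restrict (Set.Icc (0:ℝ) 1)) := by
        rw [hρ]
        refine int_of_bound 1 (((hmc1.max measurable_const).mul (hg.pow_const _)).aestronglyMeasurable) (hae.mono fun q hq => ?_)
        simp only [Set.mem_Icc] at hq
        rw [abs_mul, abs_pow]
        have h2 : |q*(1-q)| ≤ 1 := by
          have := hmem q (by simp only [Set.mem_Icc]; exact hq)
          simp only [Set.mem_Icc] at this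
          exact abs_le.2 ⟨by linarith [this.1], by linarith [this.2]⟩
        have h1 : |max (2*q-1) 0| ≤ 1 := by
          rw [abs_of_nonneg (le_max_right _ _)]
          exact max_le (by linarith [hq.2]) zero_le_one
        calc |max (2*q-1) 0| * |q*(1-q)|^(n+1) ≤ 1 * 1 :=
              mul_le_mul h1 (pow_le_one₀ (abs_nonneg _) h2) (by positivity) zero_le_one
          _ = 1 := by ring
      have hb2 : Integrable (fun q : ℝ => max (1-2*q) 0 * (q*(1-q))^(n+1)) (μ.restrict (Set.Icc (0:ℝ) 1)) := by
        rw [hρ]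
        refine int_of_bound 1 (((hmc2.max measurable_const).mul (hg.pow_const _)).aestronglyMeasurable) (hae.mono fun q hq => ?_)
        simp only [Set.mem_Icc] at hq
        rw [abs_mul, abs_pow]
        have h2 : |q*(1-q)| ≤ 1 := by
          have := hmem q (by simp only [Set.mem_Icc]; exact hq)
          simp only [Set.mem_Icc] at this
          exact abs_le.2 ⟨by linarith [this.1], by linarith [this.2]⟩
        have h1 : |max (1-2*q) 0| ≤ 1 := by
          rw [abs_of_nonneg (le_max_right _ _)]
          exact max_le (by linarith [hq.1]) zero_le_one
        calc |max (1-2*q) 0| * |q*(1-q)|^(n+1) ≤ 1 * 1 :=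
              mul_le_mul h1 (pow_le_one₀ (abs_nonneg _) h2) (by positivity) zero_le_one
          _ = 1 := by ring
      rw [← integral_sub hb1 hb2, hρ]
      congr 1; funext q
      have := max_sub_max (2*q-1) ((q*(1-q))^(n+1))
      rw [show -(2*q-1) = 1-2*q by ring] at this
      exact this
    rw [hLHS, hRHS]
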